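/- Let d ≥ 1 be an integer, let Δ ∈ (0,1), and let ε > 0. Let h be a real polynomial of degree at most d, and suppose that |h(x_j)| ≤ ε for all of the d+1 equally spaced points x_j = -Δ + (2j/d)Δ, j = 0, 1, …, d. Then |h(1)| < ε · exp(d(1 + log(1/Δ))) / √(2πd). -/

import Mathlib

open Finset

lemma kondo_stirling (d : ℕ) (hd : 1 ≤ d) :
    Real.sqrt (2 * Real.pi * d) * ((d : ℝ) / Real.exp 1) ^ d < (d.factorial : ℝ) := by
  obtain ⟨m, rfl⟩ : ∃ m, d = m + 1 := ⟨d - 1, by omega⟩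
  set d := m + 1
  have hlim : Real.sqrt Real.pi ≤ Stirling.stirlingSeq (d + 1) := by
    have ht : Filter.Tendsto (Stirling.stirlingSeq ∘ Nat.succ) Filter.atTop
        (nhds (Real.sqrt Real.pi)) :=
      Stirling.tendsto_stirlingSeq_sqrt_pi.comp (Filter.tendsto_add_atTop_nat 1)
    exact Stirling.stirlingSeq'_antitone.le_of_tendsto ht d
  have hstep : Stirling.stirlingSeq (d + 1) < Stirling.stirlingSeq d := by
    have hdiff : 0 < Real.log (Stirling.stirlingSeq (m + 1))
        - Real.log (Stirling.stirlingSeq (m + 2)) := by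
      have hs := Stirling.log_stirlingSeq_diff_hasSum m
      have h0 : (0:ℝ) < (1 : ℝ) / (2 * ((0:ℕ) + 1 : ℕ) + 1) *
          ((1 / (2 * ((m + 1 : ℕ)) + 1)) ^ 2) ^ ((0:ℕ) + 1 : ℕ) := by positivity
      exact lt_of_lt_of_le h0 (le_hasSum hs 0 fun j _ => by positivity)
    have h1 := Stirling.stirlingSeq'_pos m
    have h2 := Stirling.stirlingSeq'_pos (m + 1)
    have : Real.log (Stirling.stirlingSeq (m + 2)) < Real.log (Stirling.stirlingSeq (m + 1)) :=
      by linarith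
    exact (Real.log_lt_log_iff h2 h1).mp this
  have hpi : Real.sqrt Real.pi < Stirling.stirlingSeq d := lt_of_le_of_lt hlim hstep
  have hden : (0:ℝ) < Real.sqrt (2 * d) * ((d : ℝ) / Real.exp 1) ^ d := by positivity
  have hval : Stirling.stirlingSeq d
      = (d.factorial : ℝ) / (Real.sqrt (2 * d) * ((d : ℝ) / Real.exp 1) ^ d) := rfl
  rw [hval, lt_div_iff₀ hden] at hpi
  calc Real.sqrt (2 * Real.pi * d) * ((d : ℝ) / Real.exp 1) ^ d
      = Real.sqrt Real.pi * (Real.sqrt (2 * d) * ((d : ℝ) / Real.exp 1) ^ d) := by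
        rw [show 2 * Real.pi * (d:ℝ) = Real.pi * (2 * d) by ring,
          Real.sqrt_mul Real.pi_nonneg]
        ring
    _ < (d.factorial : ℝ) := hpi

lemma kondo_prod_abs (d j : ℕ) (hj : j ≤ d) :
    ∏ k ∈ (Finset.range (d+1)).erase j, |(j : ℝ) - (k : ℝ)|
      = ((j.factorial * (d - j).factorial : ℕ) : ℝ) := by
  have hsplit : (Finset.range (d+1)).erase j
      = Finset.range j ∪ Finset.Ico (j+1) (d+1) := by
    ext k
    simp only [Finset.mem_erase, Finset.mem_range, Finset.mem_union, Finset.mem_Ico]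
    omega
  have hdisj : Disjoint (Finset.range j) (Finset.Ico (j+1) (d+1)) := by
    simp only [Finset.disjoint_left, Finset.mem_range, Finset.mem_Ico]
    omega
  rw [hsplit, Finset.prod_union hdisj]
  have h1 : ∏ k ∈ Finset.range j, |(j : ℝ) - (k : ℝ)| = (j.factorial : ℝ) := by
    have hc : ∀ k ∈ Finset.range j, |(j:ℝ) - (k:ℝ)| = ((j - k : ℕ) : ℝ) := by
      intro k hk
      rw [Finset.mem_range] at hk
      rw [Nat.cast_sub hk.le, abs_of_nonneg]
      have : (k:ℝ) < j := by exact_mod_cast hk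
      linarith
    rw [Finset.prod_congr rfl hc, ← Nat.cast_prod]
    norm_cast
    rw [← Nat.descFactorial_eq_prod_range j j]
    exact Nat.descFactorial_self j
  have h2 : ∏ k ∈ Finset.Ico (j+1) (d+1), |(j : ℝ) - (k : ℝ)| = ((d - j).factorial : ℝ) := by
    have hc : ∀ k ∈ Finset.Ico (j+1) (d+1), |(j:ℝ) - (k:ℝ)| = ((k - j : ℕ) : ℝ) := by
      intro k hk
      rw [Finset.mem_Ico] at hk
      have hjk : j ≤ k := by omega
      rw [Nat.cast_sub hjk, abs_sub_comm, abs_of_nonneg]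
      have : (j:ℝ) ≤ k := by exact_mod_cast hjk
      linarith
    rw [Finset.prod_congr rfl hc, ← Nat.cast_prod]
    norm_cast
    rw [Finset.prod_Ico_eq_prod_range]
    have : ∀ i ∈ Finset.range (d + 1 - (j+1)), (j + 1 + i - j) = i + 1 := fun i _ => by omega
    rw [Finset.prod_congr rfl this, Finset.prod_range_add_one_eq_factorial]
    congr 1
    omega
  rw [h1, h2]
  push_cast
  ring

noncomputable def kondoV (d : ℕ) (Δ : ℝ) (k : ℕ) : ℝ := -Δ + 2 * (k : ℝ) / d * Δ

lemma kondoV_neg {d : ℕ} (hd : 1 ≤ d) (Δ : ℝ) {k : ℕ} (hk : k ≤ d) :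
    kondoV d Δ (d - k) = - kondoV d Δ k := by
  unfold kondoV
  rw [Nat.cast_sub hk]
  have hd0 : (d:ℝ) ≠ 0 := by positivity
  field_simp
  ring

lemma kondoV_abs_le {d : ℕ} (hd : 1 ≤ d) {Δ : ℝ} (hΔ : 0 < Δ) {k : ℕ} (hk : k ≤ d) :
    |kondoV d Δ k| ≤ Δ := by
  have hd0 : (0:ℝ) < d := by exact_mod_cast hd
  have hk' : (k:ℝ) ≤ d := by exact_mod_cast hk
  have h0 : 0 ≤ 2 * (k : ℝ) / d * Δ := by positivity
  have h2 : 2 * (k : ℝ) / d * Δ ≤ 2 * Δ := by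
    rw [div_mul_eq_mul_div, div_le_iff₀ hd0]
    nlinarith
  rw [abs_le]
  unfold kondoV
  constructor <;> linarith

lemma kondoV_one_sub_pos {d : ℕ} (hd : 1 ≤ d) {Δ : ℝ} (hΔ : 0 < Δ) (hΔ1 : Δ < 1)
    {k : ℕ} (hk : k ≤ d) : 0 < 1 - kondoV d Δ k := by
  have := abs_le.mp (kondoV_abs_le hd hΔ hk)
  linarith

lemma kondo_symm_prod {d : ℕ} (hd : 1 ≤ d) {Δ : ℝ} (hΔ : 0 < Δ) (hΔ1 : Δ < 1)
    (S : Finset ℕ) (hS : ∀ k ∈ S, k ≤ d) (hsymm : ∀ k ∈ S, d - k ∈ S) :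
    ∏ k ∈ S, (1 - kondoV d Δ k) ≤ 1 := by
  set g : ℕ → ℝ := fun k => Real.log (1 - kondoV d Δ k) with hg
  have hpos : ∀ k ∈ S, 0 < 1 - kondoV d Δ k := fun k hk =>
    kondoV_one_sub_pos hd hΔ hΔ1 (hS k hk)
  have hprod : ∏ k ∈ S, (1 - kondoV d Δ k) = Real.exp (∑ k ∈ S, g k) := by
    rw [Real.exp_sum]
    exact Finset.prod_congr rfl fun k hk => (Real.exp_log (hpos k hk)).symm
  rw [hprod]
  have hre : ∑ k ∈ S, g (d - k) = ∑ k ∈ S, g k := by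
    apply Finset.sum_nbij' (i := fun k => d - k) (j := fun k => d - k)
    · exact hsymm
    · exact hsymm
    · intro a ha; have := hS a ha; omega
    · intro a ha; have := hS a ha; omega
    · intro a ha; rfl
  have hpair : ∀ k ∈ S, g k + g (d - k) ≤ 0 := by
    intro k hk
    have hk' := hS k hk
    have h1 : 0 < 1 - kondoV d Δ k := hpos k hk
    have h2 : 0 < 1 + kondoV d Δ k := by
      have := abs_le.mp (kondoV_abs_le hd hΔ hk')
      linarith
    rw [hg]
    simp only
    rw [kondoV_neg hd Δ hk', sub_neg_eq_add, ← Real.log_mul h1.ne' h2.ne']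
    apply Real.log_nonpos
    · positivity
    · nlinarith [sq_nonneg (kondoV d Δ k)]
  have hsum : ∑ k ∈ S, g k ≤ 0 := by
    have h2 : (∑ k ∈ S, g k) + (∑ k ∈ S, g k) ≤ 0 := by
      calc (∑ k ∈ S, g k) + (∑ k ∈ S, g k)
          = ∑ k ∈ S, (g k + g (d - k)) := by rw [Finset.sum_add_distrib, hre]
        _ ≤ 0 := Finset.sum_nonpos hpair
    linarith
  calc Real.exp (∑ k ∈ S, g k) ≤ Real.exp 0 := Real.exp_le_exp.mpr hsum
    _ = 1 := Real.exp_zero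

noncomputable def kondoB (d : ℕ) (Δ : ℝ) (j : ℕ) : ℝ :=
  ∏ k ∈ (Finset.range (d+1)).erase j, (1 - kondoV d Δ k)

lemma kondoB_pos {d : ℕ} (hd : 1 ≤ d) {Δ : ℝ} (hΔ : 0 < Δ) (hΔ1 : Δ < 1) (j : ℕ) :
    0 < kondoB d Δ j := by
  apply Finset.prod_pos
  intro k hk
  rw [Finset.mem_erase, Finset.mem_range] at hk
  exact kondoV_one_sub_pos hd hΔ hΔ1 (by omega)

lemma kondo_pair {d : ℕ} (hd : 1 ≤ d) {Δ : ℝ} (hΔ : 0 < Δ) (hΔ1 : Δ < 1)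
    {j : ℕ} (hj : j ≤ d) :
    kondoB d Δ j + kondoB d Δ (d - j) ≤ 2 := by
  have hjm : j ∈ Finset.range (d + 1) := by simp; omega
  have hdjm : d - j ∈ Finset.range (d + 1) := by simp
  have hBj : kondoB d Δ j * (1 - kondoV d Δ j)
      = ∏ k ∈ Finset.range (d+1), (1 - kondoV d Δ k) := by
    rw [kondoB, mul_comm]
    exact Finset.mul_prod_erase _ (fun k => 1 - kondoV d Δ k) hjm
  have hBdj : kondoB d Δ (d - j) * (1 - kondoV d Δ (d - j))
      = ∏ k ∈ Finset.range (d+1), (1 - kondoV d Δ k) := by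
    rw [kondoB, mul_comm]
    exact Finset.mul_prod_erase _ (fun k => 1 - kondoV d Δ k) hdjm
  set P : ℝ := ∏ k ∈ Finset.range (d+1), (1 - kondoV d Δ k) with hP
  have ha : 0 < 1 - kondoV d Δ j := kondoV_one_sub_pos hd hΔ hΔ1 hj
  have hb : 0 < 1 - kondoV d Δ (d - j) := kondoV_one_sub_pos hd hΔ hΔ1 (by omega)
  have habsum : (1 - kondoV d Δ j) + (1 - kondoV d Δ (d - j)) = 2 := by
    rw [kondoV_neg hd Δ hj]; ring
  have hkey : P ≤ (1 - kondoV d Δ j) * (1 - kondoV d Δ (d - j)) := by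
    by_cases hjj : j = d - j
    · have hv0 : kondoV d Δ j = 0 := by
        have h := kondoV_neg hd Δ hj
        rw [← hjj] at h
        linarith
      have hBle : kondoB d Δ j ≤ 1 := by
        apply kondo_symm_prod hd hΔ hΔ1
        · intro k hk
          rw [Finset.mem_erase, Finset.mem_range] at hk
          omega
        · intro k hk
          rw [Finset.mem_erase, Finset.mem_range] at hk ⊢
          exact ⟨fun hcon => hk.1 (by omega), by omega⟩
      rw [hv0] at hBj
      rw [← hjj, hv0]
      simp only [mul_one, sub_zero] at hBj ⊢
      rw [← hBj]
      linarith
    · have hdjmem : d - j ∈ (Finset.range (d+1)).erase j :=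
        Finset.mem_erase.mpr ⟨fun hcon => hjj hcon.symm, hdjm⟩
      have hsplit : P = (1 - kondoV d Δ j) * ((1 - kondoV d Δ (d - j)) *
          ∏ k ∈ ((Finset.range (d+1)).erase j).erase (d - j), (1 - kondoV d Δ k)) := by
        rw [hP, ← Finset.mul_prod_erase _ _ hjm, ← Finset.mul_prod_erase _ _ hdjmem]
      have hprodle : ∏ k ∈ ((Finset.range (d+1)).erase j).erase (d - j),
          (1 - kondoV d Δ k) ≤ 1 := by
        apply kondo_symm_prod hd hΔ hΔ1
        · intro k hk
          simp only [Finset.mem_erase, Finset.mem_range] at hk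
          omega
        · intro k hk
          simp only [Finset.mem_erase, Finset.mem_range] at hk ⊢
          exact ⟨fun hcon => hk.1 (by omega), fun hcon => hk.2.1 (by omega), by omega⟩
      calc P = (1 - kondoV d Δ j) * ((1 - kondoV d Δ (d - j)) *
            ∏ k ∈ ((Finset.range (d+1)).erase j).erase (d - j), (1 - kondoV d Δ k)) := hsplit
        _ ≤ (1 - kondoV d Δ j) * ((1 - kondoV d Δ (d - j)) * 1) := by
            apply mul_le_mul_of_nonneg_left _ ha.le
            exact mul_le_mul_of_nonneg_left hprodle hb.le
        _ = (1 - kondoV d Δ j) * (1 - kondoV d Δ (d - j)) := by ring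
  have h1 : kondoB d Δ j = P / (1 - kondoV d Δ j) := by
    rw [eq_div_iff ha.ne']; exact hBj
  have h2 : kondoB d Δ (d - j) = P / (1 - kondoV d Δ (d - j)) := by
    rw [eq_div_iff hb.ne']; exact hBdj
  rw [h1, h2, div_add_div _ _ ha.ne' hb.ne', div_le_iff₀ (by positivity)]
  have h2P : P * (1 - kondoV d Δ (d - j)) + (1 - kondoV d Δ j) * P = 2 * P := by
    linear_combination P * habsum
  rw [h2P]
  nlinarith [hkey]

lemma kondo_half_sum {d : ℕ} (hd : 1 ≤ d) :
    ∑ j ∈ Finset.range (d+1),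
        (2:ℝ) / ((j.factorial : ℝ) * ((d - j).factorial : ℝ))
      = 2 * (2 ^ d / (d.factorial : ℝ)) := by
  have hterm : ∀ j ∈ Finset.range (d+1),
      (2:ℝ) / ((j.factorial : ℝ) * ((d - j).factorial : ℝ))
        = 2 * (d.choose j : ℝ) / (d.factorial : ℝ) := by
    intro j hj
    rw [Finset.mem_range] at hj
    have hc : ((d.choose j * (j.factorial * (d - j).factorial) : ℕ) : ℝ)
        = (d.factorial : ℝ) := by
      rw [← Nat.choose_mul_factorial_mul_factorial (by omega : j ≤ d)]
      push_cast; ring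
    push_cast at hc
    have h1 : (0:ℝ) < (j.factorial : ℝ) * ((d - j).factorial : ℝ) := by positivity
    have h2 : (0:ℝ) < (d.factorial : ℝ) := by positivity
    field_simp
    linear_combination -1 * hc
  rw [Finset.sum_congr rfl hterm]
  have : ∑ j ∈ Finset.range (d+1), 2 * (d.choose j : ℝ) / (d.factorial : ℝ)
      = (2 * ∑ j ∈ Finset.range (d+1), (d.choose j : ℝ)) / (d.factorial : ℝ) := by
    rw [Finset.mul_sum, Finset.sum_div]
  rw [this, ← Nat.cast_sum, Nat.sum_range_choose]
  push_cast
  ring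

lemma kondo_sum {d : ℕ} (hd : 1 ≤ d) {Δ : ℝ} (hΔ : 0 < Δ) (hΔ1 : Δ < 1) :
    ∑ j ∈ Finset.range (d+1),
        kondoB d Δ j / ((j.factorial : ℝ) * ((d - j).factorial : ℝ))
      ≤ 2 ^ d / (d.factorial : ℝ) := by
  have hswap : ∑ j ∈ Finset.range (d+1),
      kondoB d Δ (d - j) / ((j.factorial : ℝ) * ((d - j).factorial : ℝ))
      = ∑ j ∈ Finset.range (d+1),
      kondoB d Δ j / ((j.factorial : ℝ) * ((d - j).factorial : ℝ)) := by
    apply Finset.sum_nbij' (i := fun k => d - k) (j := fun k => d - k)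
    · intro a ha; simp at ha ⊢
    · intro a ha; simp at ha ⊢
    · intro a ha; simp at ha; omega
    · intro a ha; simp at ha; omega
    · intro a ha
      simp only [Finset.mem_range] at ha
      have h : d - (d - a) = a := by omega
      rw [h, mul_comm]
  have hmain : (∑ j ∈ Finset.range (d+1),
        kondoB d Δ j / ((j.factorial : ℝ) * ((d - j).factorial : ℝ)))
      + (∑ j ∈ Finset.range (d+1),
        kondoB d Δ j / ((j.factorial : ℝ) * ((d - j).factorial : ℝ)))
      ≤ 2 * (2 ^ d / (d.factorial : ℝ)) := by
    nth_rewrite 2 [← hswap]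
    rw [← Finset.sum_add_distrib]
    calc ∑ j ∈ Finset.range (d+1),
          (kondoB d Δ j / ((j.factorial : ℝ) * ((d - j).factorial : ℝ))
            + kondoB d Δ (d - j) / ((j.factorial : ℝ) * ((d - j).factorial : ℝ)))
        = ∑ j ∈ Finset.range (d+1),
          (kondoB d Δ j + kondoB d Δ (d - j))
            / ((j.factorial : ℝ) * ((d - j).factorial : ℝ)) :=
          Finset.sum_congr rfl fun j hj => (add_div _ _ _).symm
      _ ≤ ∑ j ∈ Finset.range (d+1),
          (2:ℝ) / ((j.factorial : ℝ) * ((d - j).factorial : ℝ)) := by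
          apply Finset.sum_le_sum
          intro j hj
          rw [Finset.mem_range] at hj
          have hp : (0:ℝ) < (j.factorial : ℝ) * ((d - j).factorial : ℝ) := by positivity
          gcongr
          exact kondo_pair hd hΔ hΔ1 (by omega)
      _ = 2 * (2 ^ d / (d.factorial : ℝ)) := kondo_half_sum hd
  linarith

/-- Lagrange-interpolation error bound (Kondo et al.): if a real polynomial `h` of degree
at most `d` satisfies `|h(x_j)| ≤ ε` at the `d+1` equally spaced points
`x_j = -Δ + (2j/d)Δ`, `j = 0, …, d`, with `Δ ∈ (0,1)`, then
`|h(1)| < ε · exp(d(1 + log(1/Δ))) / √(2πd)`. -/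
theorem lagrange_interpolation_error_bound
    (d : ℕ) (hd : 1 ≤ d) (Δ ε : ℝ) (hΔ : Δ ∈ Set.Ioo (0 : ℝ) 1) (hε : 0 < ε)
    (h : Polynomial ℝ) (hdeg : h.natDegree ≤ d)
    (hpts : ∀ j : ℕ, j ≤ d → |h.eval (-Δ + 2 * (j : ℝ) / d * Δ)| ≤ ε) :
    |h.eval 1| < ε * Real.exp (d * (1 + Real.log (1 / Δ))) / Real.sqrt (2 * Real.pi * d) := by
  obtain ⟨hΔ0, hΔ1⟩ := hΔ
  have hd0 : (0:ℝ) < d := by exact_mod_cast hd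
  -- injectivity of nodes
  have hinj : Set.InjOn (kondoV d Δ) (Finset.range (d+1)) := by
    intro a _ b _ hab
    unfold kondoV at hab
    field_simp at hab
    have hab' : (a:ℝ) = b := by linarith
    exact_mod_cast hab'
  -- degree
  have hdeglt : h.degree < ((Finset.range (d+1)).card : WithBot ℕ) := by
    rw [Finset.card_range]
    calc h.degree ≤ (h.natDegree : WithBot ℕ) := Polynomial.degree_le_natDegree
      _ ≤ (d : WithBot ℕ) := by exact_mod_cast hdeg
      _ < ((d+1 : ℕ) : WithBot ℕ) := by exact_mod_cast d.lt_succ_self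
  -- interpolation formula
  have hinterp := Lagrange.eq_interpolate hinj hdeglt
  have heval : h.eval 1 = ∑ j ∈ Finset.range (d+1),
      h.eval (kondoV d Δ j) * (Lagrange.basis (Finset.range (d+1)) (kondoV d Δ) j).eval 1 := by
    conv_lhs => rw [hinterp]
    rw [Lagrange.interpolate_apply, Polynomial.eval_finset_sum]
    exact Finset.sum_congr rfl fun j _ => by
      rw [Polynomial.eval_mul, Polynomial.eval_C]
  -- value of the basis polynomial at 1
  have hbasis : ∀ j ∈ Finset.range (d+1),
      |(Lagrange.basis (Finset.range (d+1)) (kondoV d Δ) j).eval 1|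
        = kondoB d Δ j / ((2 * Δ / d) ^ d * ((j.factorial : ℝ) * ((d - j).factorial : ℝ))) := by
    intro j hj
    rw [Finset.mem_range] at hj
    have hj' : j ≤ d := by omega
    rw [Lagrange.basis, Polynomial.eval_prod]
    have hterm : ∀ k ∈ (Finset.range (d+1)).erase j,
        (Lagrange.basisDivisor (kondoV d Δ j) (kondoV d Δ k)).eval 1
          = (kondoV d Δ j - kondoV d Δ k)⁻¹ * (1 - kondoV d Δ k) := by
      intro k _
      rw [Lagrange.basisDivisor]
      simp [Polynomial.eval_mul, Polynomial.eval_C, Polynomial.eval_sub, Polynomial.eval_X]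
    rw [Finset.prod_congr rfl hterm, Finset.abs_prod]
    have habs : ∀ k ∈ (Finset.range (d+1)).erase j,
        |(kondoV d Δ j - kondoV d Δ k)⁻¹ * (1 - kondoV d Δ k)|
          = ((2 * Δ / d) * |(j:ℝ) - (k:ℝ)|)⁻¹ * (1 - kondoV d Δ k) := by
      intro k hk
      rw [Finset.mem_erase, Finset.mem_range] at hk
      have hk' : k ≤ d := by omega
      have hdiff : kondoV d Δ j - kondoV d Δ k = (2 * Δ / d) * ((j:ℝ) - (k:ℝ)) := by
        unfold kondoV; field_simp; ring
      rw [abs_mul, abs_inv, hdiff, abs_mul,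
        abs_of_pos (by positivity : (0:ℝ) < 2 * Δ / d),
        abs_of_pos (kondoV_one_sub_pos hd hΔ0 hΔ1 hk')]
    rw [Finset.prod_congr rfl habs]
    have hcard : ((Finset.range (d+1)).erase j).card = d := by
      rw [Finset.card_erase_of_mem (by simp; omega), Finset.card_range]
      omega
    rw [Finset.prod_mul_distrib]
    have hinvprod : ∏ k ∈ (Finset.range (d+1)).erase j,
        ((2 * Δ / d) * |(j:ℝ) - (k:ℝ)|)⁻¹
        = ((2 * Δ / d) ^ d * ((j.factorial : ℝ) * ((d - j).factorial : ℝ)))⁻¹ := by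
      rw [Finset.prod_inv_distrib]
      congr 1
      rw [Finset.prod_mul_distrib, Finset.prod_const, hcard, kondo_prod_abs d j hj']
      push_cast
      ring
    rw [hinvprod, inv_mul_eq_div]
    rfl
  -- positivity facts
  have hRpos : (0:ℝ) < 2 * Δ / d := by positivity
  have hs : (0:ℝ) < Real.sqrt (2 * Real.pi * d) :=
    Real.sqrt_pos.mpr (by positivity)
  have hfacpos : (0:ℝ) < (d.factorial : ℝ) := by positivity
  -- step 1 : triangle inequality
  have habs1 : |h.eval 1| ≤ ∑ j ∈ Finset.range (d+1),
      ε * (kondoB d Δ j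
        / ((2 * Δ / d) ^ d * ((j.factorial : ℝ) * ((d - j).factorial : ℝ)))) := by
    rw [heval]
    refine (Finset.abs_sum_le_sum_abs _ _).trans (Finset.sum_le_sum ?_)
    intro j hj
    rw [abs_mul, hbasis j hj]
    have hblen : 0 ≤ kondoB d Δ j
        / ((2 * Δ / d) ^ d * ((j.factorial : ℝ) * ((d - j).factorial : ℝ))) :=
      div_nonneg (kondoB_pos hd hΔ0 hΔ1 j).le (by positivity)
    apply mul_le_mul_of_nonneg_right _ hblen
    have hjd : j ≤ d := by rw [Finset.mem_range] at hj; omega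
    exact hpts j hjd
  -- step 2 : factor out
  have hsum2 : ∑ j ∈ Finset.range (d+1),
      ε * (kondoB d Δ j
        / ((2 * Δ / d) ^ d * ((j.factorial : ℝ) * ((d - j).factorial : ℝ))))
      = ε / (2 * Δ / d) ^ d * ∑ j ∈ Finset.range (d+1),
          kondoB d Δ j / ((j.factorial : ℝ) * ((d - j).factorial : ℝ)) := by
    rw [Finset.mul_sum]
    refine Finset.sum_congr rfl fun j _ => ?_
    have h1 : ((j.factorial : ℝ) * ((d - j).factorial : ℝ)) ≠ 0 := by positivity
    have h2 : (2 * Δ / d) ^ d ≠ 0 := by positivity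
    field_simp
  have hle2 : ε / (2 * Δ / d) ^ d * (∑ j ∈ Finset.range (d+1),
      kondoB d Δ j / ((j.factorial : ℝ) * ((d - j).factorial : ℝ)))
      ≤ ε / (2 * Δ / d) ^ d * (2 ^ d / (d.factorial : ℝ)) :=
    mul_le_mul_of_nonneg_left (kondo_sum hd hΔ0 hΔ1) (by positivity)
  -- step 3 : Stirling
  have hstir := kondo_stirling d hd
  have hkey : (d:ℝ)^d * Real.sqrt (2 * Real.pi * d)
      < Real.exp 1 ^ d * (d.factorial : ℝ) := by
    rw [div_pow, mul_div_assoc'] at hstir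
    have := (div_lt_iff₀ (by positivity : (0:ℝ) < Real.exp 1 ^ d)).mp hstir
    nlinarith [this]
  have hexp : Real.exp (d * (1 + Real.log (1 / Δ)))
      = (Real.exp 1 * (1 / Δ)) ^ d := by
    rw [Real.exp_nat_mul, Real.exp_add, Real.exp_log (by positivity)]
  calc |h.eval 1|
      ≤ ε / (2 * Δ / d) ^ d * (2 ^ d / (d.factorial : ℝ)) := by
        rw [← hsum2] at hle2
        exact habs1.trans hle2
    _ = ε * ((d:ℝ)^d / (Δ ^ d * (d.factorial : ℝ))) := by
        have h2 : ((d:ℝ)) ≠ 0 := hd0.ne'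
        have h3 : Δ ≠ 0 := hΔ0.ne'
        rw [div_pow]
        field_simp
        ring
    _ < ε * (Real.exp 1 ^ d / (Δ ^ d * Real.sqrt (2 * Real.pi * d))) := by
        apply mul_lt_mul_of_pos_left _ hε
        rw [div_lt_div_iff₀ (by positivity) (by positivity)]
        have hΔd : (0:ℝ) < Δ ^ d := by positivity
        nlinarith [hkey, hΔd]
    _ = ε * Real.exp (d * (1 + Real.log (1 / Δ))) / Real.sqrt (2 * Real.pi * d) := by
        rw [hexp, mul_pow]
        have h3 : Δ ≠ 0 := hΔ0.ne'
        field_simp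
        rw [← mul_pow, mul_one_div_cancel h3, one_pow]
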